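/- For any finite convex collection 𝐏 of bitiles, the union ⋃_{P∈𝐏} P of the bitiles in 𝐏 can be written as a disjoint union of tiles. -/

import Mathlib

open MeasureTheory Set ENNReal NNReal

noncomputable section

namespace Quartile

/-- The Walsh functions on `[0,1)` (extended by zero), in Walsh-Paley order,
defined by the recursion `W_{2l} = W_l(2x) + W_l(2x-1)`, `W_{2l+1} = W_l(2x) - W_l(2x-1)`. -/
def walsh (n : ℕ) (x : ℝ) : ℝ :=
  if h : n = 0 then (if 0 ≤ x ∧ x < 1 then 1 else 0)
  else if n % 2 = 0 then walsh (n / 2) (2 * x) + walsh (n / 2) (2 * x - 1)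
  else walsh (n / 2) (2 * x) - walsh (n / 2) (2 * x - 1)
termination_by n
decreasing_by
  all_goals exact Nat.div_lt_self (Nat.pos_of_ne_zero h) one_lt_two

/-- The dyadic interval `[2^k n, 2^k (n+1)) ⊆ [0,∞)`. -/
def dyadicI (k : ℤ) (n : ℕ) : Set ℝ := Ico ((2:ℝ)^k * n) ((2:ℝ)^k * (n+1))

/-- A tile: the dyadic rectangle `[2^k n, 2^k(n+1)) × [2^{-k} l, 2^{-k}(l+1))` of area one. -/
structure Tile where
  k : ℤ
  n : ℕ
  l : ℕ

namespace Tile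

/-- The time interval `I_p` of a tile. -/
def timeI (p : Tile) : Set ℝ := Ico ((2:ℝ)^p.k * p.n) ((2:ℝ)^p.k * (p.n+1))

/-- The frequency interval `ω_p` of a tile. -/
def freqI (p : Tile) : Set ℝ := Ico ((2:ℝ)^(-p.k) * p.l) ((2:ℝ)^(-p.k) * (p.l+1))

/-- The tile as a subset of the phase plane. -/
def toSet (p : Tile) : Set (ℝ × ℝ) := p.timeI ×ˢ p.freqI

/-- The Walsh wave packet `w_p` of a tile, `L²`-normalized. -/
def wp (p : Tile) (x : ℝ) : ℝ :=
  Real.sqrt ((2:ℝ)^(-p.k)) * walsh p.l ((2:ℝ)^(-p.k) * x - p.n)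

end Tile

/-- The order on dyadic rectangles: `p ≤ q` iff `I_p ⊆ I_q` and `ω_q ⊆ ω_p`, for tiles. -/
def tileLE (p q : Tile) : Prop := p.timeI ⊆ q.timeI ∧ q.freqI ⊆ p.freqI

/-- The inner product `⟨f, w_p⟩` of a function with a (real valued) wave packet. -/
def coef (f : ℝ → ℂ) (p : Tile) : ℂ := ∫ x, f x * (p.wp x : ℂ)

/-- The rank one projection `Π_p f = ⟨f, w_p⟩ w_p` associated to a single tile. -/
def projT (p : Tile) (f : ℝ → ℂ) (x : ℝ) : ℂ := coef f p * (p.wp x : ℂ)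

/-- The projection associated to a collection of (pairwise disjoint) tiles. -/
def projSet (𝔭 : Set Tile) (f : ℝ → ℂ) (x : ℝ) : ℂ := ∑' p : 𝔭, projT p f x

/-- The maximal tiles contained in a subset `S` of the phase plane; when `S` is a disjoint
union of tiles (of the kind appearing below) these form the canonical tiling of `S`. -/
def maxTiles (S : Set (ℝ × ℝ)) : Set Tile :=
  {p | p.toSet ⊆ S ∧ ∀ q : Tile, q.toSet ⊆ S → tileLE p q → q = p}

/-- The phase plane projection `Π_S` associated to a subset `S` of the phase plane,
computed with the canonical tiling of `S` by maximal tiles (the projection is independent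
of the chosen tiling). -/
def piProj (S : Set (ℝ × ℝ)) (f : ℝ → ℂ) (x : ℝ) : ℂ := projSet (maxTiles S) f x

/-- A bitile: the dyadic rectangle `[2^k n, 2^k(n+1)) × [2^{1-k} l, 2^{1-k}(l+1))` of area two. -/
structure Bitile where
  k : ℤ
  n : ℕ
  l : ℕ

namespace Bitile

/-- The time interval `I_P` of a bitile. -/
def timeI (P : Bitile) : Set ℝ := Ico ((2:ℝ)^P.k * P.n) ((2:ℝ)^P.k * (P.n+1))

/-- The frequency interval `ω_P` of a bitile. -/
def freqI (P : Bitile) : Set ℝ := Ico ((2:ℝ)^(1-P.k) * P.l) ((2:ℝ)^(1-P.k) * (P.l+1))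

/-- The bitile as a subset of the phase plane. -/
def toSet (P : Bitile) : Set (ℝ × ℝ) := P.timeI ×ˢ P.freqI

/-- The lower tile `P_d` of a bitile. -/
def d (P : Bitile) : Tile := ⟨P.k, P.n, 2*P.l⟩

/-- The upper tile `P_u` of a bitile. -/
def u (P : Bitile) : Tile := ⟨P.k, P.n, 2*P.l+1⟩

/-- The left tile of a bitile. -/
def left (P : Bitile) : Tile := ⟨P.k-1, 2*P.n, P.l⟩

/-- The right tile of a bitile. -/
def right (P : Bitile) : Tile := ⟨P.k-1, 2*P.n+1, P.l⟩

/-- The `L^∞`-normalized wave packet `φ_{P_d} = |I_P|^{1/2} w_{P_d}`. -/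
def phid (P : Bitile) (x : ℝ) : ℝ := Real.sqrt ((2:ℝ)^P.k) * P.d.wp x

end Bitile

/-- The order on dyadic rectangles, for bitiles. -/
def bitileLE (P Q : Bitile) : Prop := P.timeI ⊆ Q.timeI ∧ Q.freqI ⊆ P.freqI

/-- Strict order on bitiles. -/
def bitileLT (P Q : Bitile) : Prop := bitileLE P Q ∧ P ≠ Q

/-- A collection of bitiles is convex if together with `P₁ < P < P₂` for `P₁, P₂` in the
collection it contains `P`. -/
def IsConvex (PP : Set Bitile) : Prop :=
  ∀ P1 P2 P : Bitile, P1 ∈ PP → P2 ∈ PP → bitileLT P1 P → bitileLT P P2 → P ∈ PP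

/-- A tree: a collection of bitiles with a (unique) maximal element `P_T = I_T × ω_T`. -/
structure Tree where
  carrier : Set Bitile
  top : Bitile
  top_mem : top ∈ carrier
  le_top : ∀ P ∈ carrier, bitileLE P top

namespace Tree

/-- `T_d`: those bitiles of the tree whose lower tile frequency interval contains `ω_T`
(in the paper's notation, `P_T ≤ P_d`). -/
def Td (T : Tree) : Set Bitile := {P | P ∈ T.carrier ∧ T.top.freqI ⊆ P.d.freqI}

/-- `T_u`: those bitiles of the tree whose upper tile frequency interval contains `ω_T`
(in the paper's notation, `P_T ≤ P_u`). -/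
def Tu (T : Tree) : Set Bitile := {P | P ∈ T.carrier ∧ T.top.freqI ⊆ P.u.freqI}

/-- The region `⋃_{P ∈ T} P` of the phase plane occupied by a tree. -/
def unionSet (T : Tree) : Set (ℝ × ℝ) := ⋃ P ∈ T.carrier, P.toSet

/-- The phase plane projection `Π_T` of a (convex) tree. -/
def proj (T : Tree) (f : ℝ → ℂ) : ℝ → ℂ := piProj T.unionSet f

end Tree

/-- The vertical dilation `2^L S` of a subset of the phase plane. -/
def dilate (L : ℕ) (S : Set (ℝ × ℝ)) : Set (ℝ × ℝ) := (fun q => (q.1, (2:ℝ)^L * q.2)) '' S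

/-- The enlarged tree `T^{(L)}` with respect to a frequency `ξ ∈ ω_T`: all bitiles `P` with
`2^L ξ ∈ ω_P` contained in a rectangle `2^L P'` with `P' ∈ T`. -/
def Tree.enlarged (L : ℕ) (T : Tree) (ξ : ℝ) : Set Bitile :=
  {P | (2:ℝ)^L * ξ ∈ P.freqI ∧ ∃ P' ∈ T.carrier, P.toSet ⊆ dilate L P'.toSet}

/-- The region of the phase plane occupied by the enlarged tree `T^{(L)}`. -/
def Tree.enlargedSet (L : ℕ) (T : Tree) (ξ : ℝ) : Set (ℝ × ℝ) :=
  ⋃ P ∈ T.enlarged L ξ, P.toSet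

/-- The left endpoint of `ω_T`, a canonical choice of `ξ ∈ ω_T`. -/
def Tree.xiTop (T : Tree) : ℝ := (2:ℝ)^(1-T.top.k) * T.top.l

/-- The phase plane projection `Π_{T^{(L)}}` of the enlarged tree (independent of the
choice of `ξ ∈ ω_T`; we use the canonical choice).  For `L = 0` this is `Π_T`. -/
def Tree.projL (L : ℕ) (T : Tree) (f : ℝ → ℂ) : ℝ → ℂ := piProj (T.enlargedSet L T.xiTop) f

/-- `size^{(L)}(PP, f) = sup |I_T|^{-1/2} ‖Π_{T^{(L)}} f‖₂`, the supremum over convex trees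
`T ⊆ PP`.  For `L = 0` this is the plain `size(PP, f)`. -/
def size (L : ℕ) (PP : Set Bitile) (f : ℝ → ℂ) : ℝ≥0∞ :=
  ⨆ (T : Tree) (_ : T.carrier ⊆ PP ∧ IsConvex T.carrier),
    (ENNReal.ofReal (Real.sqrt ((2:ℝ)^T.top.k)))⁻¹ * eLpNorm (T.projL L f) 2 volume

/-- The quartile form `Λ_{PP}` restricted to a collection `PP` of bitiles. -/
def quartileFormOn (L : ℕ) (PP : Set Bitile) (f1 f2 f3 : ℝ → ℂ) : ℂ :=
  ∫ x, ∑' P : PP, (P.1.phid x : ℂ) * projT P.1.u f1 x *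
      piProj (dilate L P.1.d.toSet) f2 x * piProj (dilate L P.1.d.toSet) f3 x

/-- The bitiles contained in the strip `ℝ₊ × [0, 2^N)`. -/
def stripBitiles (N : ℕ) : Set Bitile := {P | P.freqI ⊆ Ico (0:ℝ) ((2:ℝ)^N)}

/-- The quartile form `Λ_L` (with frequency truncation parameter `N`). -/
def quartileForm (L N : ℕ) (f1 f2 f3 : ℝ → ℂ) : ℂ :=
  quartileFormOn L (stripBitiles N) f1 f2 f3

/-- The quartile form perturbed by a bounded sequence of coefficients `c_P`. -/
def quartileFormC (L N : ℕ) (c : Bitile → ℂ) (f1 f2 f3 : ℝ → ℂ) : ℂ :=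
  ∫ x, ∑' P : stripBitiles N, c P.1 * (P.1.phid x : ℂ) * projT P.1.u f1 x *
      piProj (dilate L P.1.d.toSet) f2 x * piProj (dilate L P.1.d.toSet) f3 x

/-- The counting function `Σ_{T ∈ 𝕋} 1_{I_T}` of a collection of trees. -/
def countingFn (𝕋 : Set Tree) (x : ℝ) : ℝ≥0∞ :=
  ∑' T : 𝕋, (T.1.top.timeI).indicator (fun _ => (1:ℝ≥0∞)) x

/-- The average of an `ℝ≥0∞`-valued function over a set. -/
def avgOn (I : Set ℝ) (g : ℝ → ℝ≥0∞) : ℝ≥0∞ := (volume I)⁻¹ * ∫⁻ x in I, g x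

/-- The dyadic BMO norm on `[0,∞)` of an `ℝ≥0∞`-valued function. -/
def dyadicBMO (g : ℝ → ℝ≥0∞) : ℝ≥0∞ :=
  ⨆ (k : ℤ) (n : ℕ), avgOn (dyadicI k n)
    (fun x => (g x - avgOn (dyadicI k n) g) + (avgOn (dyadicI k n) g - g x))

/-- The dyadic Hardy-Littlewood maximal function on `[0,∞)`. -/
def dyadicMax (f : ℝ → ℂ) (x : ℝ) : ℝ≥0∞ :=
  ⨆ (k : ℤ) (n : ℕ) (_ : x ∈ dyadicI k n),
    (volume (dyadicI k n))⁻¹ * ∫⁻ y in dyadicI k n, ‖f y‖₊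

/-- The dyadic interval of length `2^j` containing `y ≥ 0`. -/
def freqInterval (j : ℤ) (y : ℝ) : Set ℝ :=
  Ico ((2:ℝ)^j * ⌊y / (2:ℝ)^j⌋) ((2:ℝ)^j * (⌊y / (2:ℝ)^j⌋ + 1))

/-- The projection `Π_l := Π_{I_T × ω_l}`, where `ω_l` is the dyadic interval of
length `2^l` containing the frequency `y`. -/
def PiScale (T : Tree) (j : ℤ) (y : ℝ) (f : ℝ → ℂ) : ℝ → ℂ :=
  piProj (T.top.timeI ×ˢ freqInterval j y) f

/-- The difference projection `Π_l^Δ = Π_l - Π_{l-1}`. -/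
def PiDelta (T : Tree) (j : ℤ) (y : ℝ) (f : ℝ → ℂ) (x : ℝ) : ℂ :=
  PiScale T j y f x - PiScale T (j-1) y f x

section TilingLemmas

lemma two_zpow_pos' (k : ℤ) : (0:ℝ) < 2^k := zpow_pos (by norm_num) k

lemma dyadicI_lt_succ (k : ℤ) (n : ℕ) : (2:ℝ)^k * n < (2:ℝ)^k * (n+1) := by
  have := two_zpow_pos' k; nlinarith

lemma dyadicI_nonempty (k : ℤ) (n : ℕ) : (dyadicI k n).Nonempty :=
  ⟨(2:ℝ)^k * n, le_rfl, dyadicI_lt_succ k n⟩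

/-- Nesting of dyadic intervals: if they intersect, the shorter is inside the longer. -/
lemma dyadic_nest {k k' : ℤ} {n n' : ℕ} (hk : k ≤ k')
    (h : (dyadicI k n ∩ dyadicI k' n').Nonempty) : dyadicI k n ⊆ dyadicI k' n' := by
  simp only [dyadicI, Set.mem_inter_iff, Set.mem_Ico] at h
  obtain ⟨x, ⟨h1, h2⟩, ⟨h3, h4⟩⟩ := h
  have hp := two_zpow_pos' k
  obtain ⟨m, hm⟩ : ∃ m : ℕ, k' = k + m := ⟨(k'-k).toNat, by omega⟩
  have h2m : (2:ℝ)^k' = 2^k * ((2^m : ℕ) : ℝ) := by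
    push_cast
    rw [hm, zpow_add₀ (by norm_num : (2:ℝ) ≠ 0), zpow_natCast]
  rw [h2m] at h3 h4
  have c1 : (2:ℝ)^k * (((2^m : ℕ):ℝ) * n') < 2^k * (n+1) := by rw [← mul_assoc]; linarith
  have c1' : ((2^m : ℕ):ℝ) * n' < (n:ℝ) + 1 := lt_of_mul_lt_mul_left c1 hp.le
  have e1 : 2^m * n' ≤ n := by
    have hc : ((2^m * n' : ℕ):ℝ) < ((n+1 : ℕ):ℝ) := by push_cast at c1' ⊢; linarith
    exact Nat.lt_succ_iff.mp (by exact_mod_cast hc)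
  have c2 : (2:ℝ)^k * n < 2^k * (((2^m : ℕ):ℝ) * ((n':ℝ)+1)) := by rw [← mul_assoc]; linarith
  have c2' : (n:ℝ) < ((2^m : ℕ):ℝ) * ((n':ℝ)+1) := lt_of_mul_lt_mul_left c2 hp.le
  have e2 : n + 1 ≤ 2^m * (n'+1) := by
    have hc : ((n : ℕ):ℝ) < ((2^m * (n'+1) : ℕ):ℝ) := by push_cast at c2' ⊢; linarith
    have := (Nat.cast_lt (α := ℝ)).mp hc
    omega
  intro y hy
  simp only [dyadicI, Set.mem_Ico] at hy ⊢
  obtain ⟨hy1, hy2⟩ := hy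
  constructor
  · rw [h2m, mul_assoc]
    push_cast
    have hc0 : ((2^m * n' : ℕ):ℝ) ≤ (n:ℝ) := Nat.cast_le.mpr e1
    push_cast at hc0
    have := mul_le_mul_of_nonneg_left hc0 hp.le
    linarith
  · rw [h2m, mul_assoc]
    push_cast
    have hc0 : ((n+1 : ℕ):ℝ) ≤ ((2^m * (n'+1) : ℕ):ℝ) := Nat.cast_le.mpr e2
    push_cast at hc0
    have := mul_le_mul_of_nonneg_left hc0 hp.le
    linarith

lemma dyadic_subset_le {k k' : ℤ} {n n' : ℕ} (h : dyadicI k n ⊆ dyadicI k' n') : k ≤ k' := by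
  simp only [dyadicI] at h
  rw [Set.Ico_subset_Ico_iff (dyadicI_lt_succ k n)] at h
  obtain ⟨h1, h2⟩ := h
  have h2' : (2:ℝ)^k * n + 2^k ≤ 2^k' * n' + 2^k' := by
    have := h2; rw [mul_add, mul_add, mul_one, mul_one] at this; linarith
  have : (2:ℝ)^k ≤ 2^k' := by linarith
  exact (zpow_le_zpow_iff_right₀ (by norm_num : (1:ℝ) < 2)).mp this

lemma dyadic_subset_inj {k : ℤ} {n n' : ℕ} (h : dyadicI k n ⊆ dyadicI k n') : n = n' := by
  simp only [dyadicI] at h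
  rw [Set.Ico_subset_Ico_iff (dyadicI_lt_succ k n)] at h
  obtain ⟨h1, h2⟩ := h
  have hp := two_zpow_pos' k
  have e1 : (n':ℝ) ≤ n := le_of_mul_le_mul_left h1 hp
  have e2 : (n:ℝ) + 1 ≤ (n':ℝ) + 1 := by
    have := le_of_mul_le_mul_left h2 hp; push_cast at this ⊢; linarith
  have : n' ≤ n ∧ n ≤ n' := ⟨by exact_mod_cast e1, by exact_mod_cast (by linarith : (n:ℝ) ≤ n')⟩
  omega

lemma dyadic_inter_inj {k : ℤ} {n n' : ℕ} (h : (dyadicI k n ∩ dyadicI k n').Nonempty) :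
    n = n' := dyadic_subset_inj (dyadic_nest le_rfl h)

/-- A dyadic interval is inside its parent. -/
lemma dyadic_double_subset (k : ℤ) (n : ℕ) : dyadicI k n ⊆ dyadicI (k+1) (n/2) := by
  apply dyadic_nest (by omega)
  refine ⟨(2:ℝ)^k * n, ⟨le_rfl, dyadicI_lt_succ k n⟩, ?_, ?_⟩
  · have h2 : (2:ℝ)^(k+1) = 2^k * 2 := zpow_add_one₀ (by norm_num) k
    have hn : 2*(n/2) ≤ n := Nat.mul_div_le n 2 |>.trans_eq rfl
    have hn' : (2:ℝ)*(↑(n/2):ℝ) ≤ (n:ℝ) := by exact_mod_cast hn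
    have hp := two_zpow_pos' k
    rw [h2]; nlinarith
  · have h2 : (2:ℝ)^(k+1) = 2^k * 2 := zpow_add_one₀ (by norm_num) k
    have hn : n < 2*(n/2) + 2 := by omega
    have hn' : (n:ℝ) < 2*(↑(n/2):ℝ) + 2 := by exact_mod_cast hn
    have hp := two_zpow_pos' k
    rw [h2]; nlinarith

/-- A dyadic child is inside its parent. -/
lemma dyadic_half_subset {k : ℤ} {n t : ℕ} (ht : t < 2) :
    dyadicI (k-1) (2*n+t) ⊆ dyadicI k n := by
  have h := dyadic_double_subset (k-1) (2*n+t)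
  have h1 : (k-1) + 1 = k := by ring
  have h2 : (2*n+t)/2 = n := by omega
  rwa [h1, h2] at h

lemma bitile_eq_of {P Q : Bitile} (hk : P.k = Q.k) (hn : P.n = Q.n) (hl : P.l = Q.l) :
    P = Q := by cases P; cases Q; simp_all

lemma bitileLT_k {P Q : Bitile} (h : bitileLT P Q) : P.k < Q.k := by
  obtain ⟨⟨ht, hf⟩, hne⟩ := h
  have h1 : P.k ≤ Q.k := dyadic_subset_le (k := P.k) (n := P.n) ht
  rcases lt_or_eq_of_le h1 with h' | he
  · exact h'
  exfalso; apply hne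
  have ht' : dyadicI P.k P.n ⊆ dyadicI P.k Q.n := by
    have : dyadicI P.k P.n ⊆ dyadicI Q.k Q.n := ht
    rwa [← he] at this
  have hf' : dyadicI (1-P.k) Q.l ⊆ dyadicI (1-P.k) P.l := by
    have : dyadicI (1-Q.k) Q.l ⊆ dyadicI (1-P.k) P.l := hf
    rwa [← he] at this
  exact bitile_eq_of he (dyadic_subset_inj ht') (dyadic_subset_inj hf').symm

end TilingLemmas

section TilingMain

/-- Key convexity step: if a half-tile of a minimal bitile `P ∈ PP` meets another bitile
`Q ∈ PP`, then that half-tile is entirely inside some bitile of `PP` other than `P`. -/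
lemma half_absorbed {PP : Set Bitile} (hconv : IsConvex PP) {P : Bitile} (hP : P ∈ PP)
    (hmin : ∀ Q ∈ PP, P.k ≤ Q.k) {t : ℕ} (ht : t < 2) {Q : Bitile} (hQ : Q ∈ PP)
    (hQP : Q ≠ P) {z : ℝ × ℝ} (hzp : z ∈ (⟨P.k, P.n, 2*P.l+t⟩ : Tile).toSet)
    (hzQ : z ∈ Q.toSet) :
    ∃ R ∈ PP, R ≠ P ∧ (⟨P.k, P.n, 2*P.l+t⟩ : Tile).toSet ⊆ R.toSet := by
  have hz1 : z.1 ∈ dyadicI P.k P.n := hzp.1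
  have hz2 : z.2 ∈ dyadicI (-P.k) (2*P.l+t) := hzp.2
  have hzQ1 : z.1 ∈ dyadicI Q.k Q.n := hzQ.1
  have hzQ2 : z.2 ∈ dyadicI (1-Q.k) Q.l := hzQ.2
  have hfreq_pP : dyadicI (-P.k) (2*P.l+t) ⊆ dyadicI (1-P.k) P.l := by
    have h := dyadic_half_subset (k := 1-P.k) (n := P.l) ht
    rwa [show (1:ℤ)-P.k-1 = -P.k by ring] at h
  have hkQ : P.k + 1 ≤ Q.k := by
    have h1 := hmin Q hQ
    by_contra hcon
    have he : Q.k = P.k := by omega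
    apply hQP
    rw [he] at hzQ1 hzQ2
    have hn : Q.n = P.n := dyadic_inter_inj ⟨z.1, hzQ1, hz1⟩
    have hl : Q.l = P.l := dyadic_inter_inj ⟨z.2, hzQ2, hfreq_pP hz2⟩
    exact bitile_eq_of he hn hl
  set R : Bitile := ⟨P.k+1, P.n/2, 2*P.l+t⟩ with hRdef
  have hfreqR : R.freqI = dyadicI (-P.k) (2*P.l+t) := by
    show dyadicI (1-(P.k+1)) (2*P.l+t) = _
    rw [show (1:ℤ)-(P.k+1) = -P.k by ring]
  have htime_PR : dyadicI P.k P.n ⊆ dyadicI (P.k+1) (P.n/2) := dyadic_double_subset P.k P.n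
  have htRQ : dyadicI (P.k+1) (P.n/2) ⊆ dyadicI Q.k Q.n :=
    dyadic_nest (by omega) ⟨z.1, htime_PR hz1, hzQ1⟩
  have hfQp : dyadicI (1-Q.k) Q.l ⊆ dyadicI (-P.k) (2*P.l+t) :=
    dyadic_nest (by omega) ⟨z.2, hzQ2, hz2⟩
  have hPR : bitileLT P R := by
    refine ⟨⟨htime_PR, ?_⟩, ?_⟩
    · rw [show Bitile.freqI R = dyadicI (-P.k) (2*P.l+t) from hfreqR]
      exact hfreq_pP
    · intro h
      have := congrArg Bitile.k h
      simp only [hRdef] at this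
      omega
  have hRQ : bitileLT R Q ∨ R = Q := by
    by_cases hc : R = Q
    · exact Or.inr hc
    · refine Or.inl ⟨⟨htRQ, ?_⟩, hc⟩
      rw [show Bitile.freqI R = dyadicI (-P.k) (2*P.l+t) from hfreqR]
      exact hfQp
  have hR : R ∈ PP := by
    rcases hRQ with h | h
    · exact hconv P Q R hP hQ hPR h
    · rw [h]; exact hQ
  refine ⟨R, hR, ?_, ?_⟩
  · intro h
    have := congrArg Bitile.k h
    simp only [hRdef] at this
    omega
  · refine Set.prod_mono htime_PR ?_
    rw [show Bitile.freqI R = dyadicI (-P.k) (2*P.l+t) from hfreqR]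
    exact subset_rfl

lemma tiling_aux (N : ℕ) : ∀ PP : Set Bitile, PP.Finite → PP.ncard ≤ N → IsConvex PP →
    ∃ 𝔭 : Set Tile, 𝔭.PairwiseDisjoint Tile.toSet ∧
      (⋃ p ∈ 𝔭, p.toSet) = ⋃ P ∈ PP, P.toSet := by
  induction N with
  | zero =>
    intro PP hfin hcard _
    have he : PP = ∅ := (Set.ncard_eq_zero hfin).mp (by omega)
    exact ⟨∅, by simp [Set.PairwiseDisjoint, Set.pairwise_empty], by simp [he]⟩
  | succ N ih =>
    intro PP hfin hcard hconv
    rcases Set.eq_empty_or_nonempty PP with he | hne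
    · exact ⟨∅, by simp [Set.PairwiseDisjoint, Set.pairwise_empty], by simp [he]⟩
    obtain ⟨P, hP, hmin⟩ := Set.exists_min_image PP (fun Q => Q.k) hfin hne
    have hfin' : (PP \ {P}).Finite := hfin.diff
    have hcard' : (PP \ {P}).ncard ≤ N := by
      have := Set.ncard_diff_singleton_lt_of_mem hP hfin
      omega
    have hconv' : IsConvex (PP \ {P}) := by
      intro P1 P2 Q h1 h2 hlt1 hlt2
      refine ⟨hconv P1 P2 Q h1.1 h2.1 hlt1 hlt2, ?_⟩
      simp only [Set.mem_singleton_iff]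
      intro hQP
      have hk := bitileLT_k hlt1
      rw [hQP] at hk
      exact absurd hk (not_lt.mpr (hmin P1 h1.1))
    obtain ⟨𝔭', hdisj', hunion'⟩ := ih (PP \ {P}) hfin' hcard' hconv'
    set S' : Set (ℝ × ℝ) := ⋃ Q ∈ PP \ {P}, Bitile.toSet Q with hS'def
    have key : ∀ t : ℕ, t < 2 → ((⟨P.k, P.n, 2*P.l+t⟩ : Tile).toSet ∩ S').Nonempty →
        (⟨P.k, P.n, 2*P.l+t⟩ : Tile).toSet ⊆ S' := by
      rintro t ht ⟨z, hz1, hz2⟩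
      rw [hS'def, Set.mem_iUnion₂] at hz2
      obtain ⟨Q, hQ, hzQ⟩ := hz2
      have hQP : Q ≠ P := by simpa using hQ.2
      obtain ⟨R, hR, hRP, hsub⟩ := half_absorbed hconv hP hmin ht hQ.1 hQP hz1 hzQ
      rw [hS'def]
      exact hsub.trans (Set.subset_biUnion_of_mem (show R ∈ PP \ {P} from ⟨hR, by simp [hRP]⟩))
    have hd_eq : (P.d : Tile) = ⟨P.k, P.n, 2*P.l+0⟩ := rfl
    have hu_eq : (P.u : Tile) = ⟨P.k, P.n, 2*P.l+1⟩ := rfl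
    have keyd : (Tile.toSet P.d ∩ S').Nonempty → Tile.toSet P.d ⊆ S' := by
      rw [hd_eq]; exact key 0 (by norm_num)
    have keyu : (Tile.toSet P.u ∩ S').Nonempty → Tile.toSet P.u ⊆ S' := by
      rw [hu_eq]; exact key 1 (by norm_num)
    classical
    set A : Set Tile := {q | (q = P.d ∧ ¬(Tile.toSet P.d ∩ S').Nonempty) ∨
        (q = P.u ∧ ¬(Tile.toSet P.u ∩ S').Nonempty)} with hAdef
    have hAmem : ∀ q ∈ A, (q = P.d ∨ q = P.u) ∧ Tile.toSet q ∩ S' = ∅ := by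
      rintro q (⟨rfl, hq⟩ | ⟨rfl, hq⟩)
      exacts [⟨Or.inl rfl, Set.not_nonempty_iff_eq_empty.mp hq⟩,
        ⟨Or.inr rfl, Set.not_nonempty_iff_eq_empty.mp hq⟩]
    have h𝔭'sub : ∀ q ∈ 𝔭', Tile.toSet q ⊆ S' := by
      intro q hq; rw [← hunion']; exact Set.subset_biUnion_of_mem hq
    have hdu : Disjoint (Tile.toSet P.d) (Tile.toSet P.u) := by
      rw [Set.disjoint_left]
      intro a ha hb
      have ha2 := ha.2
      have hb2 := hb.2
      simp only [Tile.freqI, Bitile.d, Bitile.u, Set.mem_Ico] at ha2 hb2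
      push_cast at ha2 hb2
      obtain ⟨_, ha2⟩ := ha2
      obtain ⟨hb2, _⟩ := hb2
      linarith
    have h2pow : (2:ℝ)^(1-P.k) = 2^(-P.k) * 2 := by
      rw [← zpow_add_one₀ (by norm_num : (2:ℝ) ≠ 0)]
      congr 1
      ring
    have hsplit : Bitile.toSet P = Tile.toSet P.d ∪ Tile.toSet P.u := by
      show P.timeI ×ˢ P.freqI = _
      have h1 : Tile.timeI P.d = P.timeI := rfl
      have h2 : Tile.timeI P.u = P.timeI := rfl
      rw [Tile.toSet, Tile.toSet, h1, h2, ← Set.prod_union]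
      congr 1
      show dyadicI (1-P.k) P.l = dyadicI (-P.k) (2*P.l) ∪ dyadicI (-P.k) (2*P.l+1)
      have hp := two_zpow_pos' (-P.k)
      ext y
      simp only [dyadicI, Set.mem_Ico, Set.mem_union]
      push_cast
      rw [h2pow]
      constructor
      · rintro ⟨hy1, hy2⟩
        by_cases hc : y < (2:ℝ)^(-P.k) * (2*(P.l:ℝ)+1)
        · left; constructor <;> linarith
        · right; constructor <;> linarith
      · rintro (⟨hy1, hy2⟩ | ⟨hy1, hy2⟩) <;> constructor <;> linarith
    refine ⟨𝔭' ∪ A, ?_, ?_⟩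
    · rintro a (ha | ha) b (hb | hb) hab
      · exact hdisj' ha hb hab
      · refine Set.disjoint_left.mpr fun x hxa hxb => ?_
        have hx : x ∈ Tile.toSet b ∩ S' := ⟨hxb, h𝔭'sub a ha hxa⟩
        rw [(hAmem b hb).2] at hx
        exact hx
      · refine Set.disjoint_left.mpr fun x hxa hxb => ?_
        have hx : x ∈ Tile.toSet a ∩ S' := ⟨hxa, h𝔭'sub b hb hxb⟩
        rw [(hAmem a ha).2] at hx
        exact hx
      · rcases (hAmem a ha).1 with rfl | rfl <;> rcases (hAmem b hb).1 with rfl | rfl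
        · exact absurd rfl hab
        · exact hdu
        · exact hdu.symm
        · exact absurd rfl hab
    · rw [Set.biUnion_union, hunion']
      have hPPins : PP = insert P (PP \ {P}) := by
        rw [Set.insert_diff_singleton, Set.insert_eq_self.mpr hP]
      rw [hPPins, Set.biUnion_insert, ← hS'def]
      apply Set.Subset.antisymm
      · apply Set.union_subset Set.subset_union_right
        refine Set.iUnion₂_subset fun q hq => ?_
        rcases (hAmem q hq).1 with rfl | rfl
        · have hss : Tile.toSet P.d ⊆ Bitile.toSet P := by
            rw [hsplit]; exact Set.subset_union_left
          exact hss.trans Set.subset_union_left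
        · have hss : Tile.toSet P.u ⊆ Bitile.toSet P := by
            rw [hsplit]; exact Set.subset_union_right
          exact hss.trans Set.subset_union_left
      · apply Set.union_subset
        · rw [hsplit]
          apply Set.union_subset
          · by_cases hc : (Tile.toSet P.d ∩ S').Nonempty
            · exact (keyd hc).trans Set.subset_union_left
            · exact (Set.subset_biUnion_of_mem
                (show P.d ∈ A from Or.inl ⟨rfl, hc⟩)).trans Set.subset_union_right
          · by_cases hc : (Tile.toSet P.u ∩ S').Nonempty
            · exact (keyu hc).trans Set.subset_union_left
            · exact (Set.subset_biUnion_of_mem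
                (show P.u ∈ A from Or.inr ⟨rfl, hc⟩)).trans Set.subset_union_right
        · exact Set.subset_union_left

end TilingMain

/-- The union of a finite convex collection of bitiles is a disjoint union of tiles. -/
theorem convex_union_tiling :
    ∀ PP : Set Bitile, PP.Finite → IsConvex PP →
      ∃ 𝔭 : Set Tile, 𝔭.PairwiseDisjoint Tile.toSet ∧
        (⋃ p ∈ 𝔭, p.toSet) = ⋃ P ∈ PP, P.toSet := by
  intro PP hfin hconv
  exact tiling_aux PP.ncard PP hfin le_rfl hconv

end Quartile
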